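/- arXiv:1902.06081 — 2 statements merged into one kernel-verified Lean document; each statement's English description precedes it below -/
import Mathlib

section
/- Let (Ω, A, ν) be a probability space and let (E_n)_{n=1}^∞ be a sequence of measurable sets such that Σ_{n=1}^∞ ν(E_n) = ∞. Suppose there exists a constant C > 0 such that Σ_{n,m=1}^N ν(E_n ∩ E_m) ≤ C (Σ_{n=1}^N ν(E_n))² holds for infinitely many N ∈ ℕ. Then ν(limsup_{n → ∞} E_n) ≥ 1/C. -/
/-!
Divergence part of the Borel–Cantelli lemma (Chow–Yang, Lemma 3.2;
Beresnevich–Dickinson–Velani, Proposition 2): quasi-independence on average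
along infinitely many `N` gives `ν(limsup Eₙ) ≥ 1/C`.
-/

open MeasureTheory
open ENNReal


lemma cauchy_schwarz_lintegral {Ω : Type*} [MeasurableSpace Ω] (ν : Measure Ω)
    {f : Ω → ℝ≥0∞} (hf : Measurable f) {A : Set Ω} (hA : MeasurableSet A)
    (h0 : ∀ ω ∉ A, f ω = 0) :
    (∫⁻ ω, f ω ∂ν) ^ 2 ≤ (∫⁻ ω, (f ω) ^ 2 ∂ν) * ν A := by
  have hconj : Real.HolderConjugate 2 2 := Real.HolderConjugate.two_two
  have key : ∫⁻ ω, f ω ∂ν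
      ≤ (∫⁻ ω, f ω ^ (2:ℝ) ∂ν) ^ (1/2:ℝ) * (∫⁻ ω, A.indicator 1 ω ^ (2:ℝ) ∂ν) ^ (1/2:ℝ) := by
    have := ENNReal.lintegral_mul_le_Lp_mul_Lq ν hconj hf.aemeasurable
      (measurable_one.indicator hA).aemeasurable
    refine le_trans (le_of_eq ?_) this
    refine lintegral_congr fun ω => ?_
    by_cases hω : ω ∈ A
    · simp [hω]
    · simp [hω, h0 ω hω]
  have h1 : ∫⁻ ω, f ω ^ (2:ℝ) ∂ν = ∫⁻ ω, f ω ^ 2 ∂ν := by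
    refine lintegral_congr fun ω => ?_
    rw [show (2:ℝ) = ((2:ℕ):ℝ) by norm_num, ENNReal.rpow_natCast]
  have h2 : ∫⁻ ω, A.indicator 1 ω ^ (2:ℝ) ∂ν = ν A := by
    rw [show ∫⁻ ω, A.indicator 1 ω ^ (2:ℝ) ∂ν = ∫⁻ ω, A.indicator 1 ω ∂ν from
      lintegral_congr fun ω => by by_cases hω : ω ∈ A <;> simp [hω]]
    exact lintegral_indicator_one hA
  rw [h1, h2] at key
  calc (∫⁻ ω, f ω ∂ν) ^ 2
      ≤ ((∫⁻ ω, f ω ^ 2 ∂ν) ^ (1/2:ℝ) * (ν A) ^ (1/2:ℝ)) ^ 2 := pow_le_pow_left' key 2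
    _ = (∫⁻ ω, f ω ^ 2 ∂ν) * ν A := by
        rw [mul_pow, ← ENNReal.rpow_natCast (_ ^ (1/2:ℝ)) 2, ← ENNReal.rpow_natCast ((ν A) ^ (1/2:ℝ)) 2,
          ← ENNReal.rpow_mul, ← ENNReal.rpow_mul]
        norm_num

lemma chung_erdos {Ω : Type*} [MeasurableSpace Ω] (ν : Measure Ω)
    (E : ℕ → Set Ω) (hE : ∀ n, MeasurableSet (E n)) (F : Finset ℕ) :
    (∑ n ∈ F, ν (E n)) ^ 2
      ≤ (∑ n ∈ F, ∑ m ∈ F, ν (E n ∩ E m)) * ν (⋃ n ∈ F, E n) := by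
  set f : Ω → ℝ≥0∞ := fun ω => ∑ n ∈ F, (E n).indicator 1 ω with hfdef
  have hmeas : ∀ n ∈ F, Measurable fun ω => (E n).indicator (1 : Ω → ℝ≥0∞) ω :=
    fun n _ => measurable_one.indicator (hE n)
  have hf : Measurable f := Finset.measurable_sum _ hmeas
  have hA : MeasurableSet (⋃ n ∈ F, E n) := Finset.measurableSet_biUnion _ fun n _ => hE n
  have h0 : ∀ ω ∉ (⋃ n ∈ F, E n), f ω = 0 := by
    intro ω hω
    simp only [Set.mem_iUnion, not_exists] at hω
    exact Finset.sum_eq_zero fun n hn => Set.indicator_of_notMem (hω n hn) _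
  have h1 : ∫⁻ ω, f ω ∂ν = ∑ n ∈ F, ν (E n) := by
    rw [hfdef, lintegral_finset_sum _ hmeas]
    exact Finset.sum_congr rfl fun n _ => lintegral_indicator_one (hE n)
  have h2 : ∫⁻ ω, (f ω) ^ 2 ∂ν = ∑ n ∈ F, ∑ m ∈ F, ν (E n ∩ E m) := by
    have hsq : ∀ ω, (f ω) ^ 2 = ∑ n ∈ F, ∑ m ∈ F, (E n ∩ E m).indicator 1 ω := by
      intro ω
      rw [sq, hfdef, Finset.sum_mul_sum]
      refine Finset.sum_congr rfl fun n _ => Finset.sum_congr rfl fun m _ => ?_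
      rw [← Set.inter_indicator_mul]
      simp [Set.indicator]
    simp_rw [hsq]
    rw [lintegral_finset_sum _ fun n _ => Finset.measurable_sum _
      (fun m _ => measurable_one.indicator ((hE n).inter (hE m)))]
    refine Finset.sum_congr rfl fun n _ => ?_
    rw [lintegral_finset_sum _ fun m _ => measurable_one.indicator ((hE n).inter (hE m))]
    exact Finset.sum_congr rfl fun m _ => lintegral_indicator_one ((hE n).inter (hE m))
  have := cauchy_schwarz_lintegral ν hf hA h0
  rwa [h1, h2] at this
/-- **Divergence Borel–Cantelli lemma** (Chow–Yang, Lemma 3.2). -/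
theorem divergence_borel_cantelli
    {Ω : Type*} [MeasurableSpace Ω] (ν : Measure Ω) [IsProbabilityMeasure ν]
    (E : ℕ → Set Ω) (hE : ∀ n, MeasurableSet (E n))
    (hdiv : ∑' n, ν (E n) = ⊤)
    (C : ℝ) (hC : 0 < C)
    (hqi : {N : ℕ |
        ∑ n ∈ Finset.range N, ∑ m ∈ Finset.range N, ν (E n ∩ E m)
          ≤ ENNReal.ofReal C * (∑ n ∈ Finset.range N, ν (E n)) ^ 2}.Infinite) :
    ENNReal.ofReal (1 / C) ≤ ν (⋂ N : ℕ, ⋃ n : ℕ, ⋃ _ : N ≤ n, E n) := by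
  set t : ℕ → ℝ≥0∞ := fun N => ∑ n ∈ Finset.range N, ν (E n) with ht
  set U : ℕ → Set Ω := fun K => ⋃ n : ℕ, ⋃ _ : K ≤ n, E n with hU
  have htop : Filter.Tendsto t Filter.atTop (nhds ⊤) := by
    rw [← hdiv]; exact ENNReal.tendsto_nat_tsum _
  have htfin : ∀ N, t N ≠ ⊤ := fun N =>
    (ENNReal.sum_lt_top.2 fun n _ => measure_lt_top ν (E n)).ne
  have hUmeas : ∀ K, MeasurableSet (U K) := fun K =>
    MeasurableSet.iUnion fun n => MeasurableSet.iUnion fun _ => hE n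
  have hanti : Directed (· ⊇ ·) U := by
    refine (antitone_nat_of_succ_le ?_).directed_ge
    intro K
    refine Set.iUnion_mono fun n => Set.iUnion_subset fun h => ?_
    exact Set.subset_iUnion_of_subset (Nat.le_of_succ_le h) subset_rfl
  have hiInter : ν (⋂ K, U K) = ⨅ K, ν (U K) :=
    Directed.measure_iInter (fun K => (hUmeas K).nullMeasurableSet) hanti
      ⟨0, measure_ne_top ν _⟩
  rw [show (⋂ N : ℕ, ⋃ n : ℕ, ⋃ _ : N ≤ n, E n) = ⋂ K, U K from rfl, hiInter]
  refine le_iInf fun K => ?_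
  -- key estimate for each `ε ∈ (0,1)`
  have key : ∀ ε : ℝ, 0 < ε → ε < 1 → ENNReal.ofReal ((1 - ε) ^ 2 / C) ≤ ν (U K) := by
    intro ε hε0 hε1
    set e := ENNReal.ofReal ε with he
    have he0 : e ≠ 0 := by simp [he, hε0.le, ENNReal.ofReal_eq_zero, not_le, hε0]
    have hetop : e ≠ ⊤ := ENNReal.ofReal_ne_top
    -- choose a good `N`
    have hlt : max 1 (t K / e) < ⊤ :=
      max_lt ENNReal.one_lt_top (ENNReal.div_lt_top (htfin K) he0)
    have hev : ∀ᶠ N in Filter.atTop, max 1 (t K / e) < t N :=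
      htop.eventually (eventually_gt_nhds hlt)
    obtain ⟨M, hM⟩ := Filter.eventually_atTop.mp hev
    obtain ⟨N, hNmem, hNM⟩ := hqi.exists_gt (max M K)
    have hN : max 1 (t K / e) < t N := hM N (le_trans (le_max_left _ _) hNM.le)
    have hKN : K ≤ N := le_trans (le_max_right M K) hNM.le
    have htN1 : 1 ≤ t N := ((le_max_left _ _).trans_lt hN).le
    have htNe : t K ≤ e * t N := by
      have h' : t K / e ≤ t N := ((le_max_right _ _).trans_lt hN).le
      rw [ENNReal.div_le_iff he0 hetop] at h'
      rwa [mul_comm] at h'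
    -- Chung–Erdős on `Ico K N`
    have hce := chung_erdos ν E hE (Finset.Ico K N)
    set s := ∑ n ∈ Finset.Ico K N, ν (E n) with hs
    have hsplit : t K + s = t N := by
      rw [ht, hs]
      simp only [Finset.range_eq_Ico]
      exact Finset.sum_Ico_consecutive _ (Nat.zero_le K) hKN
    have hslb : ENNReal.ofReal (1 - ε) * t N ≤ s := by
      have h1 : t N - t K ≤ s := by
        rw [tsub_le_iff_right, ← hsplit, add_comm]
      have h2 : t N - e * t N ≤ t N - t K := tsub_le_tsub_left htNe _
      calc ENNReal.ofReal (1 - ε) * t N = (1 - e) * t N := by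
            rw [he, ← ENNReal.ofReal_one, ← ENNReal.ofReal_sub _ hε0.le]
        _ = t N - e * t N := by rw [ENNReal.sub_mul fun _ _ => htfin N, one_mul]
        _ ≤ s := h2.trans h1
    have hsub : Finset.Ico K N ⊆ Finset.range N := by
      rw [Finset.range_eq_Ico]
      exact Finset.Ico_subset_Ico (Nat.zero_le K) le_rfl
    have hQ : ∑ n ∈ Finset.Ico K N, ∑ m ∈ Finset.Ico K N, ν (E n ∩ E m)
        ≤ ∑ n ∈ Finset.range N, ∑ m ∈ Finset.range N, ν (E n ∩ E m) := by
      calc ∑ n ∈ Finset.Ico K N, ∑ m ∈ Finset.Ico K N, ν (E n ∩ E m)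
          ≤ ∑ n ∈ Finset.Ico K N, ∑ m ∈ Finset.range N, ν (E n ∩ E m) :=
            Finset.sum_le_sum fun n _ => Finset.sum_le_sum_of_subset hsub
        _ ≤ _ := Finset.sum_le_sum_of_subset hsub
    have hUsub : ν (⋃ n ∈ Finset.Ico K N, E n) ≤ ν (U K) := by
      refine measure_mono (Set.iUnion₂_subset fun n hn => ?_)
      rw [hU]
      exact Set.subset_iUnion_of_subset n
        (Set.subset_iUnion_of_subset (Finset.mem_Ico.mp hn).1 subset_rfl)
    have hmain : (ENNReal.ofReal (1 - ε)) ^ 2 * (t N) ^ 2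
        ≤ ENNReal.ofReal C * ν (U K) * (t N) ^ 2 := by
      calc (ENNReal.ofReal (1 - ε)) ^ 2 * (t N) ^ 2
          = (ENNReal.ofReal (1 - ε) * t N) ^ 2 := by rw [mul_pow]
        _ ≤ s ^ 2 := pow_le_pow_left' hslb 2
        _ ≤ (∑ n ∈ Finset.Ico K N, ∑ m ∈ Finset.Ico K N, ν (E n ∩ E m))
              * ν (⋃ n ∈ Finset.Ico K N, E n) := hce
        _ ≤ (∑ n ∈ Finset.range N, ∑ m ∈ Finset.range N, ν (E n ∩ E m)) * ν (U K) :=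
            mul_le_mul' hQ hUsub
        _ ≤ ENNReal.ofReal C * (t N) ^ 2 * ν (U K) := mul_le_mul_left hNmem _
        _ = ENNReal.ofReal C * ν (U K) * (t N) ^ 2 := by ring
    have htN0 : (t N) ^ 2 ≠ 0 := pow_ne_zero _ (by intro h; simp [h] at htN1)
    have htNtop : (t N) ^ 2 ≠ ⊤ := pow_ne_top (htfin N)
    have hd2 : (ENNReal.ofReal (1 - ε)) ^ 2 ≤ ENNReal.ofReal C * ν (U K) :=
      (ENNReal.mul_le_mul_iff_left htN0 htNtop).mp hmain
    rw [ENNReal.ofReal_div_of_pos hC, ENNReal.ofReal_pow (by linarith)]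
    exact ENNReal.div_le_of_le_mul (by rwa [mul_comm] at hd2)
  -- take `ε → 0⁺`
  have hcont : Filter.Tendsto (fun ε : ℝ => ENNReal.ofReal ((1 - ε) ^ 2 / C))
      (nhdsWithin 0 (Set.Ioi 0)) (nhds (ENNReal.ofReal (1 / C))) := by
    have hc : Continuous fun ε : ℝ => ENNReal.ofReal ((1 - ε) ^ 2 / C) :=
      ENNReal.continuous_ofReal.comp (by fun_prop)
    have := (hc.tendsto 0).mono_left (nhdsWithin_le_nhds (s := Set.Ioi (0:ℝ)))
    simpa using this
  refine le_of_tendsto hcont ?_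
  filter_upwards [Ioo_mem_nhdsGT_of_mem (Set.mem_Ico.mpr ⟨le_refl (0:ℝ), zero_lt_one⟩)]
    with ε hε using key ε hε.1 hε.2
end

section
/- There exist absolute constants 0 < c ≤ C such that the following holds. Let g = 𝔨 𝔞 𝔫 ∈ SL(3,ℝ), where 𝔨 ∈ SO(3,ℝ), 𝔞 = diag(a₁, a₂, a₃) with a₁, a₂, a₃ > 0, a₁a₂a₃ = 1, a₁ ≤ (√3/2) a₂ and a₂ ≤ (√3/2) a₃, and 𝔫 is upper-triangular unipotent with off-diagonal entries n₁, n₂, n₃ satisfying |n_i| ≤ 1/2 for i = 1,2,3. Then c · a₁ ≤ min{‖g v‖ : v ∈ ℤ³ \ {0}} ≤ C · a₁, and likewise c · a₁ ≤ ‖g e₁‖ ≤ C · a₁, where e₁ = (1,0,0). -/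
/-!
The shortest-vector estimate on Siegel sets (the claim inside Chow–Yang,
Lemma 5.1): for `g = 𝔨𝔞𝔫` in the Siegel set `Ω(√3/2, 1/2)` of `SL(3,ℝ)`,
the shortest nonzero vector of the lattice `gℤ³` has sup-norm comparable
to `a₁`, and likewise `‖g e₁‖ ≍ a₁`.
-/

open Matrix

noncomputable section

private lemma norm_le_sqrt_dot (x : Fin 3 → ℝ) : ‖x‖ ≤ Real.sqrt (x ⬝ᵥ x) := by
  apply pi_norm_le_iff_of_nonneg (Real.sqrt_nonneg _) |>.mpr
  intro i
  rw [Real.norm_eq_abs, ← Real.sqrt_sq_eq_abs]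
  apply Real.sqrt_le_sqrt
  simp only [dotProduct, Fin.sum_univ_three]
  fin_cases i <;> simp <;>
    nlinarith [mul_self_nonneg (x 0), mul_self_nonneg (x 1), mul_self_nonneg (x 2)]

private lemma sqrt_dot_le_norm (x : Fin 3 → ℝ) : Real.sqrt (x ⬝ᵥ x) ≤ Real.sqrt 3 * ‖x‖ := by
  rw [show Real.sqrt 3 * ‖x‖ = Real.sqrt (3 * ‖x‖ ^ 2) by
    rw [Real.sqrt_mul (by norm_num), Real.sqrt_sq (norm_nonneg x)]]
  apply Real.sqrt_le_sqrt
  have h0 := norm_le_pi_norm x 0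
  have h1 := norm_le_pi_norm x 1
  have h2 := norm_le_pi_norm x 2
  simp only [Real.norm_eq_abs] at h0 h1 h2
  simp only [dotProduct, Fin.sum_univ_three]
  nlinarith [abs_nonneg (x 0), abs_nonneg (x 1), abs_nonneg (x 2), sq_abs (x 0),
    sq_abs (x 1), sq_abs (x 2), norm_nonneg x]

private lemma so3_dot (k : Matrix (Fin 3) (Fin 3) ℝ)
    (hk : k ∈ Matrix.specialOrthogonalGroup (Fin 3) ℝ) (y : Fin 3 → ℝ) :
    (k.mulVec y) ⬝ᵥ (k.mulVec y) = y ⬝ᵥ y := by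
  rw [Matrix.mem_specialOrthogonalGroup_iff] at hk
  have h : kᵀ * k = 1 := by
    have := (Matrix.mem_orthogonalGroup_iff' (Fin 3) ℝ).mp hk.1
    simpa using this
  rw [Matrix.dotProduct_mulVec, Matrix.vecMul_mulVec, h, Matrix.vecMul_one]

private lemma so3_norm_bounds (k : Matrix (Fin 3) (Fin 3) ℝ)
    (hk : k ∈ Matrix.specialOrthogonalGroup (Fin 3) ℝ) (y : Fin 3 → ℝ) :
    ‖y‖ / Real.sqrt 3 ≤ ‖k.mulVec y‖ ∧ ‖k.mulVec y‖ ≤ Real.sqrt 3 * ‖y‖ := by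
  have hs : (0:ℝ) < Real.sqrt 3 := Real.sqrt_pos.mpr (by norm_num)
  have hd := so3_dot k hk y
  constructor
  · have h1 : ‖y‖ ≤ Real.sqrt (y ⬝ᵥ y) := norm_le_sqrt_dot y
    have h2 : Real.sqrt ((k.mulVec y) ⬝ᵥ (k.mulVec y)) ≤ Real.sqrt 3 * ‖k.mulVec y‖ :=
      sqrt_dot_le_norm _
    rw [hd] at h2
    rw [div_le_iff₀ hs]
    calc ‖y‖ ≤ Real.sqrt 3 * ‖k.mulVec y‖ := h1.trans h2
      _ = ‖k.mulVec y‖ * Real.sqrt 3 := by ring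
  · have h1 : ‖k.mulVec y‖ ≤ Real.sqrt ((k.mulVec y) ⬝ᵥ (k.mulVec y)) := norm_le_sqrt_dot _
    rw [hd] at h1
    exact h1.trans (sqrt_dot_le_norm y)

private lemma bmul (a₁ a₂ a₃ n₁ n₂ n₃ : ℝ) (w : Fin 3 → ℝ) :
    (Matrix.diagonal ![a₁, a₂, a₃] * !![1, n₁, n₂; 0, 1, n₃; 0, 0, 1]).mulVec w
      = ![a₁ * (w 0 + n₁ * w 1 + n₂ * w 2), a₂ * (w 1 + n₃ * w 2), a₃ * w 2] := by
  funext i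
  fin_cases i <;>
    simp [Matrix.mulVec, dotProduct, Matrix.mul_apply, Fin.sum_univ_three,
      Matrix.diagonal] <;> ring

/-- **Shortest lattice vectors on a Siegel set** (from Chow–Yang, Lemma 5.1). -/
theorem siegel_set_shortest_vector :
    ∃ c C : ℝ, 0 < c ∧ c ≤ C ∧
      ∀ (k : Matrix (Fin 3) (Fin 3) ℝ), k ∈ Matrix.specialOrthogonalGroup (Fin 3) ℝ →
      ∀ a₁ a₂ a₃ : ℝ, 0 < a₁ → 0 < a₂ → 0 < a₃ →
        a₁ * a₂ * a₃ = 1 →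
        a₁ ≤ (Real.sqrt 3 / 2) * a₂ → a₂ ≤ (Real.sqrt 3 / 2) * a₃ →
      ∀ n₁ n₂ n₃ : ℝ, |n₁| ≤ 1 / 2 → |n₂| ≤ 1 / 2 → |n₃| ≤ 1 / 2 →
        (∀ v : Fin 3 → ℤ, v ≠ 0 →
          c * a₁ ≤ ‖(k * Matrix.diagonal ![a₁, a₂, a₃] * !![1, n₁, n₂; 0, 1, n₃; 0, 0, 1]).mulVec
            fun i => ((v i : ℝ))‖) ∧
        (∃ v : Fin 3 → ℤ, v ≠ 0 ∧
          ‖(k * Matrix.diagonal ![a₁, a₂, a₃] * !![1, n₁, n₂; 0, 1, n₃; 0, 0, 1]).mulVec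
            fun i => ((v i : ℝ))‖ ≤ C * a₁) ∧
        c * a₁ ≤ ‖(k * Matrix.diagonal ![a₁, a₂, a₃] * !![1, n₁, n₂; 0, 1, n₃; 0, 0, 1]).mulVec
            ![1, 0, 0]‖ ∧
        ‖(k * Matrix.diagonal ![a₁, a₂, a₃] * !![1, n₁, n₂; 0, 1, n₃; 0, 0, 1]).mulVec
            ![1, 0, 0]‖ ≤ C * a₁ := by
  refine ⟨1/2, 2, by norm_num, by norm_num, ?_⟩
  intro k hk a₁ a₂ a₃ ha₁ ha₂ ha₃ habc h12 h23 n₁ n₂ n₃ hn₁ hn₂ hn₃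
  have hs0 : (0:ℝ) ≤ 3 := by norm_num
  have hsq : Real.sqrt 3 ^ 2 = 3 := Real.sq_sqrt hs0
  have hsnn : (0:ℝ) ≤ Real.sqrt 3 := Real.sqrt_nonneg 3
  have hs2 : Real.sqrt 3 ≤ 2 := by nlinarith
  have hspos : (0:ℝ) < Real.sqrt 3 := Real.sqrt_pos.mpr (by norm_num)
  -- a₁ ≤ a₂ ≤ a₃
  have h12' : a₁ ≤ a₂ := by nlinarith
  have h23' : a₂ ≤ a₃ := by nlinarith
  set b := Matrix.diagonal ![a₁, a₂, a₃] * !![1, n₁, n₂; 0, 1, n₃; 0, 0, 1] with hb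
  have hgm : ∀ w : Fin 3 → ℝ,
      (k * Matrix.diagonal ![a₁, a₂, a₃] * !![1, n₁, n₂; 0, 1, n₃; 0, 0, 1]).mulVec w
        = k.mulVec (b.mulVec w) := by
    intro w
    rw [Matrix.mulVec_mulVec, hb, mul_assoc]
  -- ‖b e₁‖ = a₁
  have he₁ : b.mulVec ![1, 0, 0] = ![a₁, 0, 0] := by
    rw [hb, bmul]
    norm_num [Matrix.cons_val_two]
  have hne₁ : ‖(![a₁, 0, 0] : Fin 3 → ℝ)‖ = a₁ := by
    apply le_antisymm
    · apply pi_norm_le_iff_of_nonneg ha₁.le |>.mpr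
      intro i
      fin_cases i <;> simp [abs_of_pos ha₁, ha₁.le]
    · have := norm_le_pi_norm (![a₁, 0, 0] : Fin 3 → ℝ) 0
      simpa [abs_of_pos ha₁] using this
  refine ⟨?_, ?_, ?_, ?_⟩
  · -- lower bound for all nonzero v
    intro v hv
    set w : Fin 3 → ℝ := fun i => ((v i : ℝ)) with hw
    have hbw : b.mulVec w
        = ![a₁ * (w 0 + n₁ * w 1 + n₂ * w 2), a₂ * (w 1 + n₃ * w 2), a₃ * w 2] := by
      rw [hb, bmul]
    have key : ∀ i : Fin 3, v i ≠ 0 → (1:ℝ) ≤ |w i| := by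
      intro i hi
      have h1 : (1:ℤ) ≤ |v i| := Int.one_le_abs hi
      have : (1:ℝ) ≤ |(v i : ℝ)| := by exact_mod_cast h1
      simpa [hw] using this
    have comp : ∀ i : Fin 3, |(b.mulVec w) i| ≤ ‖b.mulVec w‖ := by
      intro i; simpa using norm_le_pi_norm (b.mulVec w) i
    have hbig : a₁ ≤ ‖b.mulVec w‖ := by
      by_cases h2 : v 2 ≠ 0
      · have hval : (b.mulVec w) 2 = a₃ * w 2 := by rw [hbw]; simp
        have h1 : a₃ ≤ |a₃ * w 2| := by
          rw [abs_mul, abs_of_pos ha₃]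
          nlinarith [key 2 h2, abs_nonneg (w 2)]
        calc a₁ ≤ a₃ := h12'.trans h23'
          _ ≤ |(b.mulVec w) 2| := by rw [hval]; exact h1
          _ ≤ ‖b.mulVec w‖ := comp 2
      · push_neg at h2
        have hw2 : w 2 = 0 := by simp [hw, h2]
        by_cases h1 : v 1 ≠ 0
        · have hval : (b.mulVec w) 1 = a₂ * w 1 := by rw [hbw]; simp [hw2]
          have hv1 : a₂ ≤ |a₂ * w 1| := by
            rw [abs_mul, abs_of_pos ha₂]
            nlinarith [key 1 h1, abs_nonneg (w 1)]
          calc a₁ ≤ a₂ := h12'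
            _ ≤ |(b.mulVec w) 1| := by rw [hval]; exact hv1
            _ ≤ ‖b.mulVec w‖ := comp 1
        · push_neg at h1
          have hw1 : w 1 = 0 := by simp [hw, h1]
          have h0 : v 0 ≠ 0 := by
            intro h0
            apply hv
            funext i
            fin_cases i <;> simp [h0, h1, h2]
          have hval : (b.mulVec w) 0 = a₁ * w 0 := by rw [hbw]; simp [hw1, hw2]
          have hv0 : a₁ ≤ |a₁ * w 0| := by
            rw [abs_mul, abs_of_pos ha₁]
            nlinarith [key 0 h0, abs_nonneg (w 0)]
          calc a₁ ≤ |(b.mulVec w) 0| := by rw [hval]; exact hv0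
            _ ≤ ‖b.mulVec w‖ := comp 0
    have hlow := (so3_norm_bounds k hk (b.mulVec w)).1
    rw [hgm]
    calc (1/2) * a₁ ≤ ‖b.mulVec w‖ / Real.sqrt 3 := by
          rw [le_div_iff₀ hspos]
          nlinarith [mul_nonneg ha₁.le (by linarith : (0:ℝ) ≤ 2 - Real.sqrt 3)]
      _ ≤ ‖k.mulVec (b.mulVec w)‖ := hlow
  · -- existence of short vector: v = e₁
    refine ⟨![1, 0, 0], ?_, ?_⟩
    · intro h
      have := congrFun h 0
      simp at this
    · have hcast : (fun i => ((((![1, 0, 0] : Fin 3 → ℤ)) i : ℝ))) = (![1, 0, 0] : Fin 3 → ℝ) := by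
        funext i; fin_cases i <;> simp
      rw [hcast, hgm, he₁]
      have h := (so3_norm_bounds k hk ![a₁, 0, 0]).2
      rw [hne₁] at h
      nlinarith
  · -- e₁ lower bound
    rw [hgm, he₁]
    have h := (so3_norm_bounds k hk ![a₁, 0, 0]).1
    rw [hne₁] at h
    calc (1/2) * a₁ ≤ a₁ / Real.sqrt 3 := by
          rw [le_div_iff₀ hspos]
          nlinarith [mul_nonneg ha₁.le (by linarith : (0:ℝ) ≤ 2 - Real.sqrt 3)]
      _ ≤ _ := h
  · -- e₁ upper bound
    rw [hgm, he₁]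
    have h := (so3_norm_bounds k hk ![a₁, 0, 0]).2
    rw [hne₁] at h
    nlinarith

end
end
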